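/- An inherently weak Büchi automaton can be converted into an equivalent weak Büchi automaton accepting the same ω-language: take the partition into strongly connected components, make all states of a component accepting iff the component contains an accepting cycle, and order components by reachability; the resulting weak automaton accepts the same language. -/

import Mathlib

/-- A (nondeterministic) Büchi automaton on infinite words. -/
structure NBA (A Q : Type*) where
  delta : Q → A → Set Q
  init : Q
  acc : Set Q

/-- A run of the automaton on an infinite word. -/
def NBA.IsRun {A Q : Type*} (M : NBA A Q) (w : ℕ → A) (π : ℕ → Q) : Prop :=
  π 0 = M.init ∧ ∀ i, π (i + 1) ∈ M.delta (π i) (w i)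

/-- The ω-language accepted with the Büchi condition. -/
def NBA.Lang {A Q : Type*} (M : NBA A Q) : Set (ℕ → A) :=
  {w | ∃ π, M.IsRun w π ∧ {n | π n ∈ M.acc}.Infinite}

/-- A finite path labelled by `u` from `q` to `q'` whose intermediate states
all lie in `S`. -/
def NBA.StepsIn {A Q : Type*} (M : NBA A Q) (S : Set Q) :
    Q → List A → Q → Prop
  | q, [], q' => q = q'
  | q, a :: u, q' => ∃ p, p ∈ M.delta q a ∧ p ∈ S ∧ M.StepsIn S p u q'

/-- A finite path labelled by `u` from `q` to `q'`. -/
def NBA.Steps {A Q : Type*} (M : NBA A Q) : Q → List A → Q → Prop :=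
  M.StepsIn Set.univ

/-- An accepting cycle at `q`: a nonempty cycle from `q` back to `q`
passing through a state of the accepting set. -/
def NBA.AccCycle {A Q : Type*} (M : NBA A Q) (q : Q) : Prop :=
  ∃ (f : Q) (u v : List A),
    f ∈ M.acc ∧ M.Steps q u f ∧ M.Steps f v q ∧ u ++ v ≠ []

/-- A non-accepting cycle at `q`: a nonempty cycle from `q` back to `q`
none of whose states is accepting. -/
def NBA.RejCycle {A Q : Type*} (M : NBA A Q) (q : Q) : Prop :=
  ∃ u : List A, u ≠ [] ∧ q ∉ M.acc ∧ M.StepsIn M.accᶜ q u q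

/-- Inherently weak: no reachable strongly connected component contains
both an accepting and a non-accepting cycle. -/
def NBA.InherentlyWeak {A Q : Type*} (M : NBA A Q) : Prop :=
  ¬ ∃ q₁ q₂ : Q,
      (∃ u, M.Steps M.init u q₁) ∧
      (∃ v, M.Steps q₁ v q₂) ∧ (∃ v, M.Steps q₂ v q₁) ∧
      M.AccCycle q₁ ∧ M.RejCycle q₂

/-- Weakness: the state set partitions into components (fibers of `c`) each
entirely accepting or not, with a partial order making transitions
non-increasing. -/
def NBA.IsWeak {A Q : Type*} (M : NBA A Q) : Prop :=
  ∃ (ι : Type) (_ : PartialOrder ι) (c : Q → ι),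
    (∀ q q', c q = c q' → (q ∈ M.acc ↔ q' ∈ M.acc)) ∧
    (∀ q a q', q' ∈ M.delta q a → c q' ≤ c q)

namespace NBA
variable {A Q : Type*}

lemma stepsIn_append (M : NBA A Q) {S : Set Q} :
    ∀ {u : List A} {q p r : Q} {v : List A}, M.StepsIn S q u p → M.StepsIn S p v r →
      M.StepsIn S q (u ++ v) r := by
  intro u
  induction u with
  | nil =>
    intro q p r v h1 h2
    have hqp : q = p := h1
    subst hqp; simpa using h2
  | cons a u ih =>
    rintro q p r v ⟨s, hs1, hs2, hs3⟩ h2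
    exact ⟨s, hs1, hs2, ih hs3 h2⟩

lemma steps_append (M : NBA A Q) {q p r : Q} {u v : List A}
    (h1 : M.Steps q u p) (h2 : M.Steps p v r) : M.Steps q (u ++ v) r :=
  M.stepsIn_append h1 h2

lemma steps_refl (M : NBA A Q) (q : Q) : M.Steps q [] q := rfl

lemma run_stepsIn (M : NBA A Q) {w : ℕ → A} {π : ℕ → Q}
    (hr : ∀ i, π (i + 1) ∈ M.delta (π i) (w i)) (S : Set Q) :
    ∀ (k n : ℕ), (∀ j, 1 ≤ j → j ≤ k → π (n + j) ∈ S) →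
      ∃ u : List A, u.length = k ∧ M.StepsIn S (π n) u (π (n + k)) := by
  intro k
  induction k with
  | zero => intro n _; exact ⟨[], rfl, rfl⟩
  | succ k ih =>
    intro n hS
    obtain ⟨u, hlen, hu⟩ := ih (n + 1) (fun j h1 h2 => by
      have hj := hS (j + 1) (by omega) (by omega)
      have e : n + (j + 1) = n + 1 + j := by omega
      rwa [e] at hj)
    have e : n + 1 + k = n + (k + 1) := by omega
    rw [e] at hu
    exact ⟨w n :: u, by simp [hlen], ⟨π (n + 1), hr n, hS 1 le_rfl (by omega), hu⟩⟩

lemma run_steps (M : NBA A Q) {w : ℕ → A} {π : ℕ → Q}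
    (hr : ∀ i, π (i + 1) ∈ M.delta (π i) (w i)) (k n : ℕ) :
    ∃ u : List A, u.length = k ∧ M.Steps (π n) u (π (n + k)) :=
  M.run_stepsIn hr Set.univ k n (fun _ _ _ => Set.mem_univ _)

end NBA

lemma exists_infinite_fiber' {Q : Type*} [Finite Q] (π : ℕ → Q) {s : Set ℕ}
    (hs : s.Infinite) : ∃ q, {n | n ∈ s ∧ π n = q}.Infinite := by
  by_contra hc
  push_neg at hc
  have hsub : s ⊆ ⋃ q : Q, {n | n ∈ s ∧ π n = q} :=
    fun n hn => Set.mem_iUnion.2 ⟨π n, hn, rfl⟩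
  exact hs ((Set.finite_iUnion hc).subset hsub)

/-- An inherently weak Büchi automaton can be converted into an equivalent
weak Büchi automaton over the same transition structure: declare a state
accepting iff its strongly connected component contains an accepting cycle
(ordering components by reachability); the resulting automaton is weak and
accepts the same ω-language. -/
theorem inherentlyWeak_to_weak {A Q : Type*} [Finite Q]
    (M : NBA A Q) (h : M.InherentlyWeak) :
    ∃ F' : Set Q,
      (∀ q, q ∈ F' ↔ ∃ q' : Q,
        (∃ u, M.Steps q u q') ∧ (∃ u, M.Steps q' u q) ∧ M.AccCycle q') ∧
      NBA.IsWeak ⟨M.delta, M.init, F'⟩ ∧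
      NBA.Lang ⟨M.delta, M.init, F'⟩ = M.Lang := by
  classical
  set F' : Set Q := {q | ∃ q' : Q,
      (∃ u, M.Steps q u q') ∧ (∃ u, M.Steps q' u q) ∧ M.AccCycle q'} with hF'
  refine ⟨F', fun q => Iff.rfl, ?_, ?_⟩
  · -- Weakness
    obtain ⟨n, ⟨e⟩⟩ := Finite.exists_equiv_fin Q
    refine ⟨Set (Fin n), inferInstance, fun q => e '' {p | ∃ u, M.Steps q u p}, ?_, ?_⟩
    · intro q q' hc
      have hreq : {p | ∃ u, M.Steps q u p} = {p | ∃ u, M.Steps q' u p} :=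
        (Set.image_eq_image e.injective).1 hc
      have h1 : ∃ u, M.Steps q u q' := by
        have : q' ∈ {p | ∃ u, M.Steps q' u p} := ⟨[], M.steps_refl q'⟩
        rw [← hreq] at this; exact this
      have h2 : ∃ u, M.Steps q' u q := by
        have : q ∈ {p | ∃ u, M.Steps q u p} := ⟨[], M.steps_refl q⟩
        rw [hreq] at this; exact this
      constructor
      · rintro ⟨p, ⟨u1, hu1⟩, ⟨u2, hu2⟩, hp⟩
        obtain ⟨v1, hv1⟩ := h2
        obtain ⟨v2, hv2⟩ := h1
        exact ⟨p, ⟨v1 ++ u1, M.steps_append hv1 hu1⟩,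
          ⟨u2 ++ v2, M.steps_append hu2 hv2⟩, hp⟩
      · rintro ⟨p, ⟨u1, hu1⟩, ⟨u2, hu2⟩, hp⟩
        obtain ⟨v1, hv1⟩ := h1
        obtain ⟨v2, hv2⟩ := h2
        exact ⟨p, ⟨v1 ++ u1, M.steps_append hv1 hu1⟩,
          ⟨u2 ++ v2, M.steps_append hu2 hv2⟩, hp⟩
    · intro q a q' hq'
      refine Set.image_mono ?_
      rintro p ⟨u, hu⟩
      exact ⟨a :: u, ⟨q', hq', Set.mem_univ _, hu⟩⟩
  · -- Language equality
    ext w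
    constructor
    · -- M' ⊆ M
      rintro ⟨π, ⟨h0, hstep⟩, hinf⟩
      refine ⟨π, ⟨h0, hstep⟩, ?_⟩
      obtain ⟨q, hq⟩ := exists_infinite_fiber' π hinf
      obtain ⟨nq, hnq⟩ := hq.nonempty
      obtain ⟨p, ⟨u1, hu1⟩, ⟨u2, hu2⟩, hacc⟩ : q ∈ F' := hnq.2 ▸ hnq.1
      apply Set.infinite_of_forall_exists_gt
      intro N
      obtain ⟨n, hn, hNn⟩ := hq.exists_gt N
      obtain ⟨m, hm, hnm⟩ := hq.exists_gt n
      by_contra hno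
      push_neg at hno
      -- build a rejecting cycle at q
      have hqn : π n = q := hn.2
      have hqm : π m = q := hm.2
      have hnotacc : ∀ k, n ≤ k → k ≤ m → π k ∉ M.acc := by
        intro k hk1 hk2 hkacc
        have hkN : k ≤ N := hno k hkacc
        omega
      obtain ⟨u, hlen, hu⟩ := M.run_stepsIn hstep M.accᶜ (m - n) n
        (fun j hj1 hj2 => hnotacc (n + j) (by omega) (by omega))
      rw [show n + (m - n) = m by omega, hqn, hqm] at hu
      have hrej : M.RejCycle q :=
        ⟨u, by intro hnil; rw [hnil] at hlen; simp at hlen; omega,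
          by rw [← hqn]; exact hnotacc n le_rfl (by omega), hu⟩
      obtain ⟨u0, _, hu0⟩ := M.run_steps hstep n 0
      rw [Nat.zero_add, h0, hqn] at hu0
      exact h ⟨p, q, ⟨u0 ++ u1, M.steps_append hu0 hu1⟩,
        ⟨u2, hu2⟩, ⟨u1, hu1⟩, hacc, hrej⟩
    · -- M ⊆ M'
      rintro ⟨π, ⟨h0, hstep⟩, hinf⟩
      refine ⟨π, ⟨h0, hstep⟩, ?_⟩
      obtain ⟨f, hf⟩ := exists_infinite_fiber' π hinf
      obtain ⟨n0, hn0⟩ := hf.nonempty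
      have hfacc : f ∈ M.acc := hn0.2 ▸ hn0.1
      obtain ⟨n, hn, _⟩ := hf.exists_gt 0
      obtain ⟨m, hm, hnm⟩ := hf.exists_gt n
      obtain ⟨u, hlen, hu⟩ := M.run_steps hstep (m - n) n
      rw [show n + (m - n) = m by omega] at hu
      rw [hn.2, hm.2] at hu
      have hcyc : M.AccCycle f :=
        ⟨f, u, [], hfacc, hu, M.steps_refl f, by
          simp; intro hnil; rw [hnil] at hlen; simp at hlen; omega⟩
      have hfF : f ∈ F' := ⟨f, ⟨[], M.steps_refl f⟩, ⟨[], M.steps_refl f⟩, hcyc⟩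
      refine hf.mono ?_
      intro k hk
      show π k ∈ F'
      rw [hk.2]; exact hfF
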